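/- Let λ > 0. A point (S, U, P) ∈ ℝ³ with U ≥ 0 satisfies F(S,U,P) = 0 if and only if one of the following holds: (S,U,P) = P₁ = (−1/(2√3), 0, 0); or U = 0 and 3S² + (3/2)P² = 1 (the family Σ); or (S,U,P) = P₃ = ((2−λ²)/(2√3(λ²+1)), √(λ²+2)/(√2(λ²+1)), λ/(λ²+1)); or λ ≤ √6 and (S,U,P) = P₂ = (0, √((6−λ²)/18), λ/3). In other words, P₁, P₂ (for λ ≤ √6), P₃ and the one-parameter family Σ are exactly the critical points of the reduced system with U ≥ 0. -/

import Mathlib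

/-- `S`-component of the reduced vector field `F`. -/
noncomputable def FS (lam S U P : ℝ) : ℝ :=
  -1 / (3 * Real.sqrt 3) - (2 / 3) * S + S ^ 2 / Real.sqrt 3
    + U ^ 2 / Real.sqrt 3 + P ^ 2 / (2 * Real.sqrt 3)
    + 2 * S ^ 3 - S * U ^ 2 + S * P ^ 2

/-- `U`-component of the reduced vector field `F`. -/
noncomputable def FU (lam S U P : ℝ) : ℝ :=
  U * (1 / 3 - (lam / 2) * P + 2 * S ^ 2 - U ^ 2 + P ^ 2)

/-- `P`-component of the reduced vector field `F`. -/
noncomputable def FP (lam S U P : ℝ) : ℝ :=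
  -(2 / 3) * P + lam * U ^ 2 + 2 * S ^ 2 * P - U ^ 2 * P + P ^ 3

private lemma fs_factor (lam S U P : ℝ) : FS lam S U P =
    (S + 1/(2*Real.sqrt 3)) * (2*S^2 - U^2 + P^2 - 2/3) + (Real.sqrt 3/2) * U^2 := by
  have hs : Real.sqrt 3 ^ 2 = 3 := Real.sq_sqrt (by norm_num)
  have hs0 : Real.sqrt 3 ≠ 0 := by positivity
  unfold FS
  field_simp
  linear_combination (-3*U^2) * hs

private lemma fu_factor (lam S U P : ℝ) : FU lam S U P =
    U * ((2*S^2 - U^2 + P^2 - 2/3) + 1 - (lam/2)*P) := by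
  unfold FU; ring

private lemma fp_factor (lam S U P : ℝ) : FP lam S U P =
    P * (2*S^2 - U^2 + P^2 - 2/3) + lam * U^2 := by
  unfold FP; ring

private lemma eq_sqrt_of_sq {x y : ℝ} (hx : 0 ≤ x) (h : x^2 = y) : x = Real.sqrt y := by
  rw [← h, Real.sqrt_sq hx]

set_option maxHeartbeats 1000000 in
/-- For `λ > 0`, the critical points of the reduced system
with `U ≥ 0` are exactly: `P₁ = (−1/(2√3), 0, 0)`, the one-parameter family
`Σ = {U = 0, 3S² + (3/2)P² = 1}`,
`P₃ = ((2−λ²)/(2√3(λ²+1)), √(λ²+2)/(√2(λ²+1)), λ/(λ²+1))`, and — provided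
`λ ≤ √6` — `P₂ = (0, √((6−λ²)/18), λ/3)`. -/
theorem critical_points_classification
    (lam : ℝ) (hlam : 0 < lam) (S U P : ℝ) (hU : 0 ≤ U) :
    (FS lam S U P = 0 ∧ FU lam S U P = 0 ∧ FP lam S U P = 0) ↔
      ((S, U, P) = (-1 / (2 * Real.sqrt 3), 0, 0) ∨
       (U = 0 ∧ 3 * S ^ 2 + (3 / 2) * P ^ 2 = 1) ∨
       (S, U, P) = ((2 - lam ^ 2) / (2 * Real.sqrt 3 * (lam ^ 2 + 1)),
          Real.sqrt (lam ^ 2 + 2) / (Real.sqrt 2 * (lam ^ 2 + 1)),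
          lam / (lam ^ 2 + 1)) ∨
       (lam ≤ Real.sqrt 6 ∧
         (S, U, P) = (0, Real.sqrt ((6 - lam ^ 2) / 18), lam / 3))) := by
  have hs : Real.sqrt 3 ^ 2 = 3 := Real.sq_sqrt (by norm_num)
  have hs0 : (0:ℝ) < Real.sqrt 3 := Real.sqrt_pos.mpr (by norm_num)
  set s := Real.sqrt 3 with hsdef
  have hs0' : s ≠ 0 := ne_of_gt hs0
  have hlam0 : lam ≠ 0 := ne_of_gt hlam
  have hT : (0:ℝ) < lam^2 + 1 := by positivity
  have hT0 : lam^2 + 1 ≠ 0 := ne_of_gt hT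
  rw [fs_factor, fu_factor, fp_factor]
  constructor
  · rintro ⟨h1, h2, h3⟩
    rcases eq_or_lt_of_le hU with hU0 | hUpos
    · -- U = 0 case
      have hU0' : U = 0 := hU0.symm
      subst hU0'
      have h1' : (S + 1/(2*s)) * (2*S^2 + P^2 - 2/3) = 0 := by linear_combination h1
      have h3' : P * (2*S^2 + P^2 - 2/3) = 0 := by linear_combination h3
      rcases mul_eq_zero.mp h1' with hA | hQ
      · rcases mul_eq_zero.mp h3' with hP | hQ
        · refine Or.inl ?_
          rw [Prod.mk.injEq, Prod.mk.injEq]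
          exact ⟨by linear_combination hA, rfl, hP⟩
        · exact Or.inr (Or.inl ⟨rfl, by linarith⟩)
      · exact Or.inr (Or.inl ⟨rfl, by linarith⟩)
    · -- U > 0 case
      have hUne : U ≠ 0 := ne_of_gt hUpos
      have hQ : 2*S^2 - U^2 + P^2 - 2/3 = (lam/2)*P - 1 := by
        have := (mul_eq_zero.mp h2).resolve_left hUne
        linarith
      have hU2 : lam * U^2 = P - (lam/2)*P^2 := by
        linear_combination h3 - P * hQ
      have key : ((lam/2)*P - 1) * (lam*(S + 1/(2*s)) - (s/2)*P) = 0 := by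
        linear_combination lam * h1 - (s/2) * h3 - (lam*(S + 1/(2*s)) - (s/2)*P) * hQ
      rcases mul_eq_zero.mp key with hcon | hA
      · exfalso
        have hz : lam * U^2 = 0 := by linear_combination h3 - P*hQ - P*hcon
        have : U^2 = 0 := by
          rcases mul_eq_zero.mp hz with h | h
          · exact absurd h hlam0
          · exact h
        nlinarith
      · have hA' : 2*s*lam*S + lam - 3*P = 0 := by
          have h2s : s * (1/(2*s)) = 1/2 := by field_simp
          linear_combination 2*s*hA + P*hs - 2*lam*h2s
        have quad : (3*P - lam) * ((lam^2+1)*P - lam) = 0 := by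
          linear_combination (-(1:ℝ)/3)*(2*s*lam*S - lam + 3*P) * hA' + (2*lam) * hU2
            + (2*lam^2) * hQ + (4/3)*lam^2*S^2 * hs
        rcases mul_eq_zero.mp quad with h31 | h32
        · -- P = lam / 3, the point P₂
          have hP : P = lam/3 := by linarith
          have hS : S = 0 := by
            have hz : 2*s*lam*S = 0 := by linarith
            by_contra hSne
            exact (mul_ne_zero (mul_ne_zero (mul_ne_zero two_ne_zero hs0') hlam0) hSne) hz
          have hU6 : U^2 = (6 - lam^2)/18 := by
            have h' : lam * U^2 = lam * ((6-lam^2)/18) := by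
              linear_combination hU2 + (-(lam/6)*P + (6-lam^2)/18) * h31
            exact mul_left_cancel₀ hlam0 h'
          have hU2nn : 0 ≤ (6-lam^2)/18 := hU6 ▸ sq_nonneg U
          have hlam6 : lam ≤ Real.sqrt 6 := by
            nlinarith [Real.sq_sqrt (show (0:ℝ) ≤ 6 by norm_num), Real.sqrt_nonneg 6]
          refine Or.inr (Or.inr (Or.inr ⟨hlam6, ?_⟩))
          rw [Prod.mk.injEq, Prod.mk.injEq]
          exact ⟨hS, eq_sqrt_of_sq hU hU6, hP⟩
        · -- the point P₃
          have hP : P = lam/(lam^2+1) := by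
            field_simp
            linear_combination h32
          have hS : S = (2 - lam^2)/(2*s*(lam^2+1)) := by
            have key2 : (2*s*lam*(lam^2+1)) * S
                = (2*s*lam*(lam^2+1)) * ((2-lam^2)/(2*s*(lam^2+1))) := by
              have hr : (2*s*lam*(lam^2+1)) * ((2-lam^2)/(2*s*(lam^2+1)))
                  = lam*(2-lam^2) := by field_simp
              rw [hr]
              linear_combination (lam^2+1)*hA' + 3*h32
            exact mul_left_cancel₀ (by positivity) key2
          have hU2v : U^2 = (lam^2+2)/(2*(lam^2+1)^2) := by
            have h5 : (2*(lam^2+1)^2*lam) * U^2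
                = (2*(lam^2+1)^2*lam) * ((lam^2+2)/(2*(lam^2+1)^2)) := by
              have hr : (2*(lam^2+1)^2*lam) * ((lam^2+2)/(2*(lam^2+1)^2))
                  = lam*(lam^2+2) := by field_simp
              rw [hr]
              linear_combination 2*(lam^2+1)^2*hU2 + (-(lam*(lam^2+1)*P) + lam^2+2)*h32
            exact mul_left_cancel₀ (by positivity) h5
          refine Or.inr (Or.inr (Or.inl ?_))
          rw [Prod.mk.injEq, Prod.mk.injEq]
          refine ⟨hS, ?_, hP⟩
          have h2' : Real.sqrt (lam^2+2) / (Real.sqrt 2 * (lam^2+1))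
              = Real.sqrt ((lam^2+2)/(2*(lam^2+1)^2)) := by
            refine eq_sqrt_of_sq (by positivity) ?_
            rw [div_pow, mul_pow, Real.sq_sqrt (by positivity : (0:ℝ) ≤ lam^2+2),
              Real.sq_sqrt (by norm_num : (0:ℝ) ≤ 2)]
          exact (eq_sqrt_of_sq hU hU2v).trans h2'.symm
  · rintro (h | ⟨hU0, hSig⟩ | h | ⟨hl6, h⟩)
    · rw [Prod.mk.injEq, Prod.mk.injEq] at h
      obtain ⟨hS, hU0, hP⟩ := h
      subst hS; subst hU0; subst hP
      refine ⟨by ring, by ring, by ring⟩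
    · subst hU0
      have hQ : 2*S^2 + P^2 - 2/3 = 0 := by linarith
      refine ⟨by linear_combination (S + 1/(2*s)) * hQ, by ring,
        by linear_combination P * hQ⟩
    · rw [Prod.mk.injEq, Prod.mk.injEq] at h
      obtain ⟨hS, hU0, hP⟩ := h
      have hU2v : U^2 = (lam^2+2)/(2*(lam^2+1)^2) := by
        rw [hU0, div_pow, mul_pow, Real.sq_sqrt (by positivity : (0:ℝ) ≤ lam^2+2),
          Real.sq_sqrt (by norm_num : (0:ℝ) ≤ 2)]
      have hAval : S + 1/(2*s) = s/(2*(lam^2+1)) := by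
        rw [hS]
        field_simp
        linear_combination (-1:ℝ) * hs
      have hQv : 2*S^2 - U^2 + P^2 - 2/3 = -(lam^2+2)/(2*(lam^2+1)) := by
        rw [hS, hP, hU2v]
        field_simp
        linear_combination (-4 + 4*lam^2 - lam^4) * hs
      refine ⟨?_, ?_, ?_⟩
      · rw [hQv, hAval, hU2v]
        field_simp
        ring
      · rw [mul_eq_zero]
        right
        rw [hQv, hP]
        field_simp
        ring
      · rw [hQv, hP, hU2v]
        field_simp
        ring
    · rw [Prod.mk.injEq, Prod.mk.injEq] at h
      obtain ⟨hS, hU0, hP⟩ := h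
      subst hS; subst hU0; subst hP
      have hl2 : lam^2 ≤ 6 := by
        nlinarith [Real.sq_sqrt (show (0:ℝ) ≤ 6 by norm_num), Real.sqrt_nonneg 6]
      have hU2 : (Real.sqrt ((6-lam^2)/18))^2 = (6-lam^2)/18 :=
        Real.sq_sqrt (by linarith [hl2])
      refine ⟨?_, ?_, ?_⟩
      · rw [hU2]
        field_simp
        linear_combination (54 - 9*lam^2) * hs
      · rw [mul_eq_zero]
        right
        rw [hU2]
        ring
      · rw [hU2]
        ring
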